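/- Let $S \subseteq T$ be finite-dimensional affine subspaces of a real inner product space $V$, and write each $t \in T$ uniquely as $t = \pi_S(t) + \pi_S^\perp(t)$ with $\pi_S(t) \in S$ and $\pi_S^\perp(t) \in T^0 \ominus S^0$. Define $p_{ST} : \mathbb{R}_{\ge 0} \times T \to \mathbb{R}_{\ge 0} \times S$ by $p_{ST}(x,t) = (\sqrt{x^2 + \|\pi_S^\perp(t)\|^2}, \pi_S(t))$. Then $p_{ST}$ is a continuous proper map (preimages of compact sets are compact), and for $S \subseteq T \subseteq T'$ one has $p_{ST'} = p_{ST} \circ p_{TT'}$. -/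

import Mathlib

open EuclideanGeometry

variable {V : Type*} [NormedAddCommGroup V] [InnerProductSpace ℝ V]

/-- The map `p_S : ℝ₊ × V ⊇ ℝ₊ × T → ℝ₊ × S`,
`p_S(x,t) = (√(x² + ‖π_S^⊥(t)‖²), π_S(t))`, where `π_S` is the nearest-point
(orthogonal) projection onto the affine subspace `S`. -/
noncomputable def pST (S : AffineSubspace ℝ V) [Nonempty S]
    [Submodule.HasOrthogonalProjection S.direction] (p : ℝ × V) : ℝ × V :=
  (Real.sqrt (p.1 ^ 2 + ‖p.2 - (EuclideanGeometry.orthogonalProjection S p.2 : V)‖ ^ 2),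
    (EuclideanGeometry.orthogonalProjection S p.2 : V))

/-- The domain `ℝ₊ × T ⊆ ℝ × V`. -/
def domT (T : AffineSubspace ℝ V) : Set (ℝ × V) := {p | 0 ≤ p.1 ∧ p.2 ∈ T}

lemma continuous_projS (S : AffineSubspace ℝ V) [Nonempty S]
    [Submodule.HasOrthogonalProjection S.direction] :
    Continuous (fun v : V => (EuclideanGeometry.orthogonalProjection S v : V)) := by
  obtain ⟨p₀⟩ := ‹Nonempty S›
  have h : ∀ v : V, (EuclideanGeometry.orthogonalProjection S v : V)
      = (Submodule.orthogonalProjectionOnto S.direction (v - p₀) : V)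
        + (EuclideanGeometry.orthogonalProjection S (p₀ : V) : V) := by
    intro v
    conv_lhs => rw [show v = (v - ↑p₀) +ᵥ (↑p₀ : V) by simp [vadd_eq_add]]
    rw [ContinuousAffineMap.map_vadd, orthogonalProjection_contLinear]
    simp [vadd_eq_add]
  have hc : Continuous (fun v : V => (Submodule.orthogonalProjectionOnto S.direction (v - p₀) : V)
      + (EuclideanGeometry.orthogonalProjection S (p₀ : V) : V)) := by
    have : Continuous (fun v : V => (Submodule.orthogonalProjectionOnto S.direction (v - p₀) : V)) :=
      continuous_subtype_val.comp
        ((Submodule.orthogonalProjectionOnto S.direction).continuous.comp (by fun_prop))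
    fun_prop
  exact hc.congr fun v => (h v).symm

lemma proj_projS (S T : AffineSubspace ℝ V) [Nonempty S] [Nonempty T]
    [Submodule.HasOrthogonalProjection S.direction] [Submodule.HasOrthogonalProjection T.direction]
    (hST : S ≤ T) (v : V) :
    (EuclideanGeometry.orthogonalProjection S
        ((EuclideanGeometry.orthogonalProjection T v : V)) : V)
      = EuclideanGeometry.orthogonalProjection S v := by
  set w : V := (EuclideanGeometry.orthogonalProjection S
      ((EuclideanGeometry.orthogonalProjection T v : V)) : V) with hw
  have h1 : w ∈ (S : Set V) := orthogonalProjection_mem _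
  have h2 : w ∈ AffineSubspace.mk' v S.directionᗮ := by
    rw [AffineSubspace.mem_mk']
    have ha : w -ᵥ (EuclideanGeometry.orthogonalProjection T v : V) ∈ S.directionᗮ := by
      have := vsub_orthogonalProjection_mem_direction_orthogonal S
        ((EuclideanGeometry.orthogonalProjection T v : V))
      simpa using S.directionᗮ.neg_mem this
    have hb : (EuclideanGeometry.orthogonalProjection T v : V) -ᵥ v ∈ S.directionᗮ := by
      have := vsub_orthogonalProjection_mem_direction_orthogonal T v
      have h3 : T.directionᗮ ≤ S.directionᗮ :=
        Submodule.orthogonal_le (AffineSubspace.direction_le hST)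
      simpa using h3 (T.directionᗮ.neg_mem this)
    have := S.directionᗮ.add_mem ha hb
    simpa [vsub_eq_sub, sub_add_sub_cancel] using this
  have h4 := inter_eq_singleton_orthogonalProjection (s := S) v
  have : w ∈ ({(EuclideanGeometry.orthogonalProjection S v : V)} : Set V) := by
    rw [← h4]; exact ⟨h1, h2⟩
  simpa using this

lemma pythagorasS (S T : AffineSubspace ℝ V) [Nonempty S] [Nonempty T]
    [Submodule.HasOrthogonalProjection S.direction] [Submodule.HasOrthogonalProjection T.direction]
    (hST : S ≤ T) (v : V) :
    ‖v - (EuclideanGeometry.orthogonalProjection S v : V)‖ ^ 2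
      = ‖v - (EuclideanGeometry.orthogonalProjection T v : V)‖ ^ 2
        + ‖(EuclideanGeometry.orthogonalProjection T v : V)
            - (EuclideanGeometry.orthogonalProjection S v : V)‖ ^ 2 := by
  set a : V := v - (EuclideanGeometry.orthogonalProjection T v : V)
  set b : V := (EuclideanGeometry.orthogonalProjection T v : V)
      - (EuclideanGeometry.orthogonalProjection S v : V)
  have hab : v - (EuclideanGeometry.orthogonalProjection S v : V) = a + b := by
    simp [a, b]
  have ha : a ∈ T.directionᗮ := by
    simpa [a] using vsub_orthogonalProjection_mem_direction_orthogonal T v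
  have hb : b ∈ T.direction := by
    have := AffineSubspace.vsub_mem_direction (orthogonalProjection_mem (s := T) v)
      (hST (orthogonalProjection_mem (s := S) v))
    simpa [b] using this
  have hi : (inner ℝ a b : ℝ) = 0 := (Submodule.mem_orthogonal' _ _).1 ha b hb
  rw [hab, norm_add_sq_real, hi]
  ring

/-- for finite-dimensional affine subspaces `S ⊆ T` of a real inner
product space, the map `p_ST : ℝ₊ × T → ℝ₊ × S`,
`p_ST(x,t) = (√(x² + ‖π_S^⊥(t)‖²), π_S(t))`, is continuous and proper (preimages of
compact sets are compact), and for `S ⊆ T ⊆ T'` one has `p_ST' = p_ST ∘ p_TT'`. -/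
theorem stmt10 (S T T' : AffineSubspace ℝ V)
    [Nonempty S] [Nonempty T] [Nonempty T']
    [Submodule.HasOrthogonalProjection S.direction] [Submodule.HasOrthogonalProjection T.direction]
    [FiniteDimensional ℝ S.direction] [FiniteDimensional ℝ T.direction]
    [FiniteDimensional ℝ T'.direction]
    (hST : S ≤ T) (hTT' : T ≤ T') :
    -- `p_ST` maps `ℝ₊ × T` into `ℝ₊ × S`:
    (∀ p ∈ domT T, pST S p ∈ domT S) ∧
    -- continuity:
    ContinuousOn (pST S) (domT T) ∧
    -- properness: preimages (inside the domain `ℝ₊ × T`) of compact sets are compact: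
    (∀ K : Set (ℝ × V), K ⊆ domT S → IsCompact K →
      IsCompact (pST S ⁻¹' K ∩ domT T)) ∧
    -- functoriality `p_ST' = p_ST ∘ p_TT'` on `ℝ₊ × T'`:
    (∀ p ∈ domT T', pST S p = pST S (pST T p)) := by
  have hc : Continuous (pST S) := by
    have hπ := continuous_projS S
    unfold pST
    apply Continuous.prodMk
    · exact (by fun_prop : Continuous fun p : ℝ × V =>
        p.1 ^ 2 + ‖p.2 - (EuclideanGeometry.orthogonalProjection S p.2 : V)‖ ^ 2).sqrt
    · fun_prop
  refine ⟨?_, hc.continuousOn, ?_, ?_⟩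
  · intro p _
    exact ⟨Real.sqrt_nonneg _, orthogonalProjection_mem _⟩
  · intro K hK hKc
    obtain ⟨r, hr⟩ := hKc.isBounded.subset_closedBall 0
    set R : ℝ := max r 0 with hR
    have hr' : K ⊆ Metric.closedBall 0 R :=
      hr.trans (Metric.closedBall_subset_closedBall (le_max_left _ _))
    obtain ⟨t₀, ht₀⟩ := nonempty_subtype.mp (inferInstance : Nonempty T)
    set A := pST S ⁻¹' K ∩ domT T with hA
    have hAclosed : IsClosed A := by
      apply (hKc.isClosed.preimage hc).inter
      have : domT T = {p : ℝ × V | 0 ≤ p.1} ∩ (Prod.snd ⁻¹' (T : Set V)) := rfl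
      rw [this]
      exact (isClosed_le continuous_const continuous_fst).inter
        (T.closed_of_finiteDimensional.preimage continuous_snd)
    -- bound on A
    have hbound : ∀ p ∈ A, ‖p‖ ≤ 2 * R + ‖t₀‖ := by
      intro p hp
      have hm : pST S p ∈ Metric.closedBall (0 : ℝ × V) R := hr' hp.1
      rw [Metric.mem_closedBall, dist_zero_right, Prod.norm_def, max_le_iff] at hm
      obtain ⟨h1, h2⟩ := hm
      have hs : Real.sqrt (p.1 ^ 2 + ‖p.2 - (EuclideanGeometry.orthogonalProjection S p.2 : V)‖ ^ 2) ≤ R := by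
        simpa [pST, Real.norm_eq_abs, abs_of_nonneg (Real.sqrt_nonneg _)] using h1
      have hx : |p.1| ≤ R := by
        calc |p.1| = Real.sqrt (p.1 ^ 2) := (Real.sqrt_sq_eq_abs _).symm
        _ ≤ _ := Real.sqrt_le_sqrt (le_add_of_nonneg_right (by positivity))
        _ ≤ R := hs
      have hd : ‖p.2 - (EuclideanGeometry.orthogonalProjection S p.2 : V)‖ ≤ R := by
        calc ‖p.2 - (EuclideanGeometry.orthogonalProjection S p.2 : V)‖
            = Real.sqrt (‖p.2 - (EuclideanGeometry.orthogonalProjection S p.2 : V)‖ ^ 2) := by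
              rw [Real.sqrt_sq (norm_nonneg _)]
        _ ≤ _ := Real.sqrt_le_sqrt (le_add_of_nonneg_left (by positivity))
        _ ≤ R := hs
      have hπ : ‖(EuclideanGeometry.orthogonalProjection S p.2 : V)‖ ≤ R := by
        simpa [pST] using h2
      have hp2 : ‖p.2‖ ≤ 2 * R := by
        calc ‖p.2‖ = ‖(p.2 - (EuclideanGeometry.orthogonalProjection S p.2 : V))
            + (EuclideanGeometry.orthogonalProjection S p.2 : V)‖ := by congr 1; abel
        _ ≤ _ := norm_add_le _ _
        _ ≤ 2 * R := by linarith
      rw [Prod.norm_def, max_le_iff]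
      have ht : (0:ℝ) ≤ ‖t₀‖ := norm_nonneg _
      have hR0 : (0:ℝ) ≤ R := le_max_right _ _
      constructor
      · simp only [Real.norm_eq_abs]; linarith
      · linarith
    -- embed into ℝ × T.direction
    set f : ℝ × T.direction → ℝ × V := fun q => (q.1, (q.2 : V) + t₀) with hf
    have hfc : Continuous f := by fun_prop
    have hrange : A ⊆ Set.range f := by
      rintro p hp
      exact ⟨(p.1, ⟨p.2 - t₀, AffineSubspace.vsub_mem_direction hp.2.2 ht₀⟩), by simp [f]⟩
    have himg : A = f '' (f ⁻¹' A) := by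
      rw [Set.image_preimage_eq_inter_range, Set.inter_eq_left.mpr hrange]
    have hpreb : f ⁻¹' A ⊆ Metric.closedBall 0 (2 * R + 2 * ‖t₀‖) := by
      intro q hq
      have := hbound _ hq
      rw [Metric.mem_closedBall, dist_zero_right, Prod.norm_def, max_le_iff]
      rw [Prod.norm_def, max_le_iff] at this
      obtain ⟨h1, h2⟩ := this
      have hw : ‖(q.2 : V)‖ ≤ ‖(q.2 : V) + t₀‖ + ‖t₀‖ := by
        calc ‖(q.2 : V)‖ = ‖((q.2 : V) + t₀) + (-t₀)‖ := by congr 1; abel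
        _ ≤ _ := by simpa using norm_add_le ((q.2 : V) + t₀) (-t₀)
      have ht : (0:ℝ) ≤ ‖t₀‖ := norm_nonneg _
      constructor
      · simp only [f] at h1; linarith
      · simp only [f] at h2
        have : ‖q.2‖ = ‖(q.2 : V)‖ := rfl
        rw [this]; linarith
    have hprec : IsCompact (f ⁻¹' A) :=
      Metric.isCompact_of_isClosed_isBounded (hAclosed.preimage hfc)
        (Metric.isBounded_closedBall.subset hpreb)
    rw [himg]
    exact hprec.image hfc
  · intro p _
    have h1 := proj_projS S T hST p.2
    have h2 := pythagorasS S T hST p.2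
    simp only [pST, h1, Prod.mk.injEq]
    refine ⟨?_, trivial⟩
    rw [Real.sq_sqrt (by positivity)]
    rw [h2]; ring_nf
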